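/- Let L₁ > 0, L₂ > 0, M > 0, N ≥ 1, c̄ ∈ (0, 1), and define t̄ := sup{ t > 0 : e^{L₂ s} − (L₂ + c̄ L₂²/(L₁√N)) s − 1 < 0 for all s ∈ (0, t] }. Define the functions H_κ : [0, ∞) → ℝ recursively by H₁(t) := M t and H_{κ+1}(t) := ∫_0^t e^{L₂(t−s)} L₁ √N H_κ(s) ds for κ ≥ 1. Then for every integer m ≥ 1 it holds H_m(t) ≤ c̄^{m−1} M t for all t ∈ [0, t̄]. -/

import Mathlib

open Real intervalIntegral Set

lemma aux_integral_exp (L₂ t : ℝ) (hL₂ : 0 < L₂) :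
    ∫ s in (0:ℝ)..t, Real.exp (L₂ * (t - s)) * s
      = (Real.exp (L₂ * t) - 1 - L₂ * t) / L₂ ^ 2 := by
  have hderiv : ∀ s ∈ Set.uIcc (0:ℝ) t,
      HasDerivAt (fun s => -(Real.exp (L₂ * (t - s)) * (s * L₂ + 1)) / L₂ ^ 2)
        (Real.exp (L₂ * (t - s)) * s) s := by
    intro s _
    have h1 : HasDerivAt (fun s : ℝ => L₂ * (t - s)) (L₂ * (-1)) s :=
      ((hasDerivAt_id s).const_sub t).const_mul L₂
    have h2 : HasDerivAt (fun s : ℝ => Real.exp (L₂ * (t - s)))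
        (Real.exp (L₂ * (t - s)) * (L₂ * (-1))) s := h1.exp
    have h3 : HasDerivAt (fun s : ℝ => s * L₂ + 1) L₂ s := by
      simpa using ((hasDerivAt_id s).mul_const L₂).add_const 1
    have h4 := ((h2.mul h3).neg).div_const (L₂ ^ 2)
    refine h4.congr_deriv ?_
    have : L₂ ≠ 0 := hL₂.ne'
    rw [div_eq_iff (pow_ne_zero 2 this)]
    ring
  have hint : IntervalIntegrable (fun s => Real.exp (L₂ * (t - s)) * s)
      MeasureTheory.volume 0 t :=
    ((Real.continuous_exp.comp (continuous_const.mul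
      (continuous_const.sub continuous_id))).mul continuous_id).intervalIntegrable 0 t
  rw [intervalIntegral.integral_eq_sub_of_hasDerivAt hderiv hint]
  simp only [sub_self, sub_zero, mul_zero, zero_mul, zero_add, mul_one, Real.exp_zero]
  field_simp
  ring

theorem stmt10 (L₁ L₂ M N c : ℝ) (hL₁ : 0 < L₁) (hL₂ : 0 < L₂) (hM : 0 < M)
    (hN : 1 ≤ N) (hc0 : 0 < c) (hc1 : c < 1)
    (tbar : ℝ)
    (htbar : tbar = sSup {t : ℝ | 0 < t ∧ ∀ s : ℝ, 0 < s → s ≤ t →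
      Real.exp (L₂ * s) - (L₂ + c * L₂ ^ 2 / (L₁ * Real.sqrt N)) * s - 1 < 0})
    (H : ℕ → ℝ → ℝ)
    (hH1 : ∀ t : ℝ, H 1 t = M * t)
    (hHrec : ∀ κ : ℕ, 1 ≤ κ → ∀ t : ℝ,
      H (κ + 1) t = ∫ s in (0:ℝ)..t, Real.exp (L₂ * (t - s)) * (L₁ * Real.sqrt N * H κ s)) :
    ∀ m : ℕ, 1 ≤ m → ∀ t ∈ Set.Icc (0:ℝ) tbar, H m t ≤ c ^ (m - 1) * (M * t) := by
  have hsN : (1:ℝ) ≤ Real.sqrt N := by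
    have := Real.sqrt_le_sqrt hN
    simpa using this
  have hsN0 : (0:ℝ) < Real.sqrt N := lt_of_lt_of_le one_pos hsN
  have hden : 0 < L₁ * Real.sqrt N := mul_pos hL₁ hsN0
  set S : Set ℝ := {t : ℝ | 0 < t ∧ ∀ s : ℝ, 0 < s → s ≤ t →
      Real.exp (L₂ * s) - (L₂ + c * L₂ ^ 2 / (L₁ * Real.sqrt N)) * s - 1 < 0} with hS
  -- the key inequality on [0, tbar]
  have key : ∀ u ∈ Set.Icc (0:ℝ) tbar,
      Real.exp (L₂ * u) - 1 - L₂ * u ≤ c * L₂ ^ 2 / (L₁ * Real.sqrt N) * u := by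
    have fcont : Continuous (fun u : ℝ =>
        Real.exp (L₂ * u) - (L₂ + c * L₂ ^ 2 / (L₁ * Real.sqrt N)) * u - 1) :=
      ((Real.continuous_exp.comp (continuous_const.mul continuous_id)).sub
        (continuous_const.mul continuous_id)).sub continuous_const
    have hstrict : ∀ u : ℝ, 0 < u → u < tbar →
        Real.exp (L₂ * u) - (L₂ + c * L₂ ^ 2 / (L₁ * Real.sqrt N)) * u - 1 < 0 := by
      intro u hu hut
      have hne : S.Nonempty := by
        by_contra h
        rw [Set.not_nonempty_iff_eq_empty] at h
        rw [htbar, h, Real.sSup_empty] at hut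
        linarith
      obtain ⟨t', ht', hut'⟩ := exists_lt_of_lt_csSup hne (htbar ▸ hut)
      exact ht'.2 u hu hut'.le
    intro u hu
    rcases eq_or_lt_of_le hu.1 with h0 | h0
    · simp [← h0]
    rcases eq_or_lt_of_le hu.2 with h2 | h2
    · have hub : ∀ v ∈ Set.Ioo (0:ℝ) u,
          Real.exp (L₂ * v) - (L₂ + c * L₂ ^ 2 / (L₁ * Real.sqrt N)) * v - 1 ≤ 0 := by
        intro v hv
        exact (hstrict v hv.1 (h2 ▸ hv.2)).le
      have hmem : u ∈ closure (Set.Ioo (0:ℝ) u) := by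
        rw [closure_Ioo h0.ne]
        exact ⟨h0.le, le_rfl⟩
      have hNeBot : (nhdsWithin u (Set.Ioo (0:ℝ) u)).NeBot :=
        mem_closure_iff_nhdsWithin_neBot.mp hmem
      have htend : Filter.Tendsto (fun v : ℝ =>
          Real.exp (L₂ * v) - (L₂ + c * L₂ ^ 2 / (L₁ * Real.sqrt N)) * v - 1)
          (nhdsWithin u (Set.Ioo (0:ℝ) u)) (nhds
            (Real.exp (L₂ * u) - (L₂ + c * L₂ ^ 2 / (L₁ * Real.sqrt N)) * u - 1)) :=
        (fcont.tendsto u).mono_left nhdsWithin_le_nhds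
      have hle := le_of_tendsto htend (Filter.eventually_iff_exists_mem.mpr
        ⟨Set.Ioo 0 u, self_mem_nhdsWithin, hub⟩)
      nlinarith [hle]
    · have := hstrict u h0 h2
      nlinarith [this]
  -- continuity of H κ
  have hcont : ∀ κ : ℕ, 1 ≤ κ → Continuous (H κ) := by
    intro κ hκ
    induction κ with
    | zero => omega
    | succ n ih =>
      rcases Nat.eq_or_lt_of_le hκ with h | h
      · have : n = 0 := by omega
        subst this
        have : H 1 = fun t => M * t := funext hH1
        rw [this]
        exact continuous_const.mul continuous_id
      · have hn : 1 ≤ n := by omega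
        have ihn := ih hn
        have heq : H (n + 1) = fun t => Real.exp (L₂ * t) *
            ∫ s in (0:ℝ)..t, Real.exp (-(L₂ * s)) * (L₁ * Real.sqrt N * H n s) := by
          funext t
          rw [hHrec n hn t, ← intervalIntegral.integral_const_mul]
          apply intervalIntegral.integral_congr
          intro s _
          have hexp : Real.exp (L₂ * (t - s)) = Real.exp (L₂ * t) * Real.exp (-(L₂ * s)) := by
            rw [← Real.exp_add]; congr 1; ring
          simp only [hexp, mul_assoc]
        rw [heq]
        apply Continuous.mul
        · exact Real.continuous_exp.comp (continuous_const.mul continuous_id)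
        · apply intervalIntegral.continuous_primitive
          intro a b
          exact ((Real.continuous_exp.comp (continuous_neg.comp
            (continuous_const.mul continuous_id))).mul
            (continuous_const.mul ihn)).intervalIntegrable a b
  -- the main induction
  intro m hm
  induction m with
  | zero => omega
  | succ n ih =>
    rcases Nat.eq_or_lt_of_le hm with h | h
    · have : n = 0 := by omega
      subst this
      intro t ht
      rw [hH1]
      simp
    · have hn : 1 ≤ n := by omega
      have ihn := ih hn
      intro t ht
      have ht0 : 0 ≤ t := ht.1
      simp only [Nat.add_sub_cancel]
      rw [hHrec n hn t]
      have hmono : (∫ s in (0:ℝ)..t, Real.exp (L₂ * (t - s)) * (L₁ * Real.sqrt N * H n s))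
          ≤ ∫ s in (0:ℝ)..t, Real.exp (L₂ * (t - s)) * (L₁ * Real.sqrt N * (c ^ (n-1) * (M * s))) := by
        apply intervalIntegral.integral_mono_on ht0
        · exact ((Real.continuous_exp.comp (continuous_const.mul
            (continuous_const.sub continuous_id))).mul
            (continuous_const.mul (hcont n hn))).intervalIntegrable 0 t
        · exact ((Real.continuous_exp.comp (continuous_const.mul
            (continuous_const.sub continuous_id))).mul
            (continuous_const.mul (continuous_const.mul
              (continuous_const.mul continuous_id)))).intervalIntegrable 0 t
        · intro s hs
          have hsmem : s ∈ Set.Icc (0:ℝ) tbar := ⟨hs.1, le_trans hs.2 ht.2⟩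
          have h1 := ihn s hsmem
          have h2 : L₁ * Real.sqrt N * H n s ≤ L₁ * Real.sqrt N * (c ^ (n-1) * (M * s)) :=
            mul_le_mul_of_nonneg_left h1 hden.le
          exact mul_le_mul_of_nonneg_left h2 (Real.exp_pos _).le
      have heval : (∫ s in (0:ℝ)..t, Real.exp (L₂ * (t - s)) * (L₁ * Real.sqrt N * (c ^ (n-1) * (M * s))))
          = L₁ * Real.sqrt N * (c ^ (n-1) * M) * ((Real.exp (L₂ * t) - 1 - L₂ * t) / L₂ ^ 2) := by
        rw [← aux_integral_exp L₂ t hL₂, ← intervalIntegral.integral_const_mul]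
        apply intervalIntegral.integral_congr
        intro s _
        ring
      have hkey := key t ht
      calc (∫ s in (0:ℝ)..t, Real.exp (L₂ * (t - s)) * (L₁ * Real.sqrt N * H n s))
          ≤ L₁ * Real.sqrt N * (c ^ (n-1) * M) * ((Real.exp (L₂ * t) - 1 - L₂ * t) / L₂ ^ 2) := by
            rw [← heval]; exact hmono
        _ ≤ L₁ * Real.sqrt N * (c ^ (n-1) * M) * ((c * L₂ ^ 2 / (L₁ * Real.sqrt N) * t) / L₂ ^ 2) := by
            gcongr
        _ = c ^ n * (M * t) := by
            have h1 : n - 1 + 1 = n := by omega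
            have e : L₁ * Real.sqrt N ≠ 0 := hden.ne'
            have e2 : L₂ ≠ 0 := hL₂.ne'
            rw [show c ^ n = c ^ (n - 1) * c by rw [← pow_succ, h1]]
            field_simp
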